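/- Let V be a ℚ-vector space with a symmetric bilinear form of signature (1,n), and let FPℚ be the set of rational points of a connected component of the positive cone. Define for any subset W ⊆ V the dual W^ = {v : v·w > 0 for all w ∈ W}. Then (FPℚ)^ equals the closure cone: the set of v in the closure of FP (intersected with V) , i.e. (FPℚ)^ = closure(FP)ℚ \ {0}. -/

import Mathlib

/-- The rational Minkowski form of signature (1,n). -/
def qform (n : ℕ) (x y : Fin (n+1) → ℚ) : ℚ :=
  x 0 * y 0 - ∑ i : Fin n, x i.succ * y i.succ

/-- The rational points of the forward component of the positive cone. -/
def FPQ (n : ℕ) : Set (Fin (n+1) → ℚ) := {x | 0 < qform n x x ∧ 0 < x 0}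

/-- Lemma 6.2, first step: the dual of FPℚ is the set of nonzero rational
points of the closure of FP. -/
theorem stmt11 (n : ℕ) :
    {v : Fin (n+1) → ℚ | ∀ w ∈ FPQ n, 0 < qform n v w} =
      {v : Fin (n+1) → ℚ | (0 ≤ qform n v v ∧ 0 ≤ v 0) ∧ v ≠ 0} := by
  ext v
  simp only [Set.mem_setOf_eq]
  constructor
  · intro h
    -- e0 is in FPQ
    set e0 : Fin (n+1) → ℚ := fun j => if j = 0 then 1 else 0 with he0def
    have he0 : e0 ∈ FPQ n := by
      constructor
      · simp [qform, he0def, Fin.succ_ne_zero]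
      · simp [he0def]
    have hv0 : 0 < v 0 := by
      have := h e0 he0
      simpa [qform, he0def, Fin.succ_ne_zero] using this
    have hvne : v ≠ 0 := by
      intro hv
      rw [hv] at hv0
      simp at hv0
    refine ⟨⟨?_, le_of_lt hv0⟩, hvne⟩
    by_contra hq
    push_neg at hq
    set S : ℚ := ∑ i : Fin n, v i.succ * v i.succ with hSdef
    have hS : v 0 * v 0 < S := by
      have : qform n v v = v 0 * v 0 - S := rfl
      linarith [this ▸ hq]
    have hSpos : 0 < S := lt_of_le_of_lt (mul_self_nonneg _) hS
    set w : Fin (n+1) → ℚ := fun j => if j = 0 then S / v 0 else v j with hwdef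
    have hw0 : w 0 = S / v 0 := by simp [hwdef]
    have hwi : ∀ i : Fin n, w i.succ = v i.succ := by
      intro i; simp [hwdef, Fin.succ_ne_zero]
    have hdivpos : 0 < S / v 0 := div_pos hSpos hv0
    have hgt : v 0 < S / v 0 := by
      rw [lt_div_iff₀ hv0]; linarith [hS]
    have hwFPQ : w ∈ FPQ n := by
      constructor
      · show 0 < w 0 * w 0 - ∑ i : Fin n, w i.succ * w i.succ
        have hsum : ∑ i : Fin n, w i.succ * w i.succ = S := by
          rw [hSdef]; exact Finset.sum_congr rfl fun i _ => by rw [hwi i]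
        rw [hw0, hsum]
        have h1 : v 0 * (S / v 0) = S := by field_simp
        nlinarith [hgt, hdivpos]
      · rw [hw0]; exact hdivpos
    have := h w hwFPQ
    have hqvw : qform n v w = 0 := by
      show v 0 * w 0 - ∑ i : Fin n, v i.succ * w i.succ = 0
      have hsum : ∑ i : Fin n, v i.succ * w i.succ = S := by
        rw [hSdef]; exact Finset.sum_congr rfl fun i _ => by rw [hwi i]
      rw [hw0, hsum]
      field_simp
      ring
    rw [hqvw] at this
    exact lt_irrefl 0 this
  · rintro ⟨⟨hq, hv0⟩, hvne⟩ w ⟨hw, hw0⟩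
    set Sv : ℚ := ∑ i : Fin n, v i.succ * v i.succ with hSvdef
    set Sw : ℚ := ∑ i : Fin n, w i.succ * w i.succ with hSwdef
    set A : ℚ := ∑ i : Fin n, v i.succ * w i.succ with hAdef
    have hSv : Sv ≤ v 0 * v 0 := by
      have : qform n v v = v 0 * v 0 - Sv := rfl
      linarith [this ▸ hq]
    have hSw : Sw < w 0 * w 0 := by
      have : qform n w w = w 0 * w 0 - Sw := rfl
      linarith [this ▸ hw]
    have hCS : A ^ 2 ≤ Sv * Sw := by
      have := Finset.sum_mul_sq_le_sq_mul_sq Finset.univ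
        (fun i : Fin n => v i.succ) (fun i : Fin n => w i.succ)
      simpa [hAdef, hSvdef, hSwdef, sq] using this
    have hSvnn : 0 ≤ Sv := Finset.sum_nonneg fun i _ => mul_self_nonneg _
    have hSwnn : 0 ≤ Sw := Finset.sum_nonneg fun i _ => mul_self_nonneg _
    show 0 < v 0 * w 0 - A
    by_cases hSv0 : Sv = 0
    · -- all spatial components of v are zero, so v 0 > 0 and A = 0
      have hzero : ∀ i : Fin n, v i.succ = 0 := by
        intro i
        have := (Finset.sum_eq_zero_iff_of_nonneg
          (fun i _ => mul_self_nonneg (v i.succ))).mp hSv0 i (Finset.mem_univ i)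
        exact mul_self_eq_zero.mp this
      have hA0 : A = 0 := by
        rw [hAdef]
        exact Finset.sum_eq_zero fun i _ => by rw [hzero i, zero_mul]
      have hv0pos : 0 < v 0 := by
        rcases lt_or_eq_of_le hv0 with h | h
        · exact h
        · exfalso; apply hvne; funext j
          refine Fin.cases ?_ ?_ j
          · exact h.symm
          · exact hzero
      rw [hA0]
      simpa using mul_pos hv0pos hw0
    · have hSvpos : 0 < Sv := lt_of_le_of_lt (by simp) (lt_of_le_of_ne hSvnn (Ne.symm hSv0))
      have hv0pos : 0 < v 0 := by nlinarith
      nlinarith [hCS, mul_pos hv0pos hw0, mul_le_mul_of_nonneg_right hSv hSwnn, mul_lt_mul_of_pos_left hSw (mul_pos hv0pos hv0pos), sq_nonneg (v 0 * w 0 - A), sq_nonneg (v 0 * w 0 + A)]
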